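/- Let x : [0,∞) → ℝ be a càdlàg function of bounded variation satisfying x_t = x_0 + δ t + Σ_{s ∈ (0,t]} (x_s − x_{s−}) for all t ≥ 0, with δ > 0. Define I_t = inf_{s ∈ [0,t]} (x_s ∧ 0) and x̌_t = x_t − I_t. Then for every t ≥ 0, I_t = (x_0 ∧ 0) + Σ_{s ∈ (0,t]} ( x̌_{s−} + (x_s − x_{s−}) ) ∧ 0. -/

import Mathlib

open MeasureTheory Filter Topology Set

/-- A function `f : ℝ → ℝ` viewed on `[0,∞)` is càdlàg. -/
def Cadlag (f : ℝ → ℝ) : Prop :=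
  (∀ t : ℝ, 0 ≤ t → ContinuousWithinAt f (Set.Ici t) t) ∧
  (∀ t : ℝ, 0 < t → ∃ l : ℝ, Filter.Tendsto f (nhdsWithin t (Set.Iio t)) (nhds l))

noncomputable def auxJ (x : ℝ → ℝ) (v : ℝ) : ℝ := x v - Function.leftLim x v

lemma aux_summable_on {g f : ℝ → ℝ} {S T : Set ℝ}
    (hT : Summable (T.indicator f)) (hST : S ⊆ T)
    (hdom : ∀ v ∈ S, |g v| ≤ f v) (hf : ∀ v, 0 ≤ f v) :
    Summable (fun v : S => g v) := by
  have h1 : Summable (fun v : ℝ => |S.indicator g v|) := by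
    apply Summable.of_nonneg_of_le (fun v => abs_nonneg _) _ hT
    intro v
    by_cases hv : v ∈ S
    · rw [Set.indicator_of_mem hv, Set.indicator_of_mem (hST hv)]
      exact hdom v hv
    · rw [Set.indicator_of_notMem hv]
      simpa using Set.indicator_nonneg (fun w _ => hf w) v
  exact summable_subtype_iff_indicator.mpr (Summable.of_abs h1)

lemma aux_minmin (p q : ℝ) : min p 0 + min q 0 ≤ min (p + q) 0 := by
  rcases le_total p 0 with h|h <;> rcases le_total q 0 with h'|h' <;>
    simp [min_def] <;> split_ifs <;> linarith

lemma aux_minge {q m : ℝ} (h : m ≤ q) (hm : m ≤ 0) : m ≤ min q 0 :=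
  le_min h hm

lemma aux_xleft (x : ℝ → ℝ) (hx : Cadlag x) {a : ℝ} (ha : 0 < a) :
    Tendsto x (𝓝[<] a) (𝓝 (Function.leftLim x a)) := by
  obtain ⟨l, hl⟩ := hx.2 a ha
  rwa [leftLim_eq_of_tendsto hl]

lemma aux_sum_abs_le (x : ℝ → ℝ) (hx : Cadlag x) (F : Finset ℝ) :
    ∀ b : ℝ, 0 ≤ b → ↑F ⊆ Ioc (0:ℝ) b → ∀ ε : ℝ, 0 < ε →
    ∑ v ∈ F, ENNReal.ofReal |x v - Function.leftLim x v|
      ≤ eVariationOn x (Icc 0 b) + ENNReal.ofReal ε := by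
  induction F using Finset.induction_on_max with
  | empty => intro b hb hF ε hε; simp
  | insert a s hlt IH =>
    intro b hb hF ε hε
    have ha : a ∈ Ioc (0:ℝ) b := hF (by simp)
    obtain ⟨c₀, hc₀0, hc₀a, hc₀s⟩ : ∃ c₀, 0 ≤ c₀ ∧ c₀ < a ∧ ∀ y ∈ s, y ≤ c₀ := by
      rcases s.eq_empty_or_nonempty with h | h
      · exact ⟨0, le_refl _, ha.1, by simp [h]⟩
      · refine ⟨s.max' h, le_of_lt ?_, hlt _ (s.max'_mem h), fun y hy => s.le_max' y hy⟩
        exact (hF (by simp [Finset.mem_insert, (s.max'_mem h)])).1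
    have hL := aux_xleft x hx ha.1
    have h1 : ∀ᶠ u in 𝓝[<] a, |x u - Function.leftLim x a| < ε/2 := by
      have := Metric.tendsto_nhds.mp hL (ε/2) (by positivity)
      simpa [Real.dist_eq] using this
    have h2 : Ioo c₀ a ∈ 𝓝[<] a := Ioo_mem_nhdsLT_of_mem ⟨hc₀a, le_refl _⟩
    obtain ⟨u, hu1, hu2⟩ := (h1.and (Filter.eventually_mem_set.mpr h2)).exists
    have hu0 : 0 ≤ u := le_of_lt (lt_of_le_of_lt hc₀0 hu2.1)
    have hua : u ≤ a := le_of_lt hu2.2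
    have key1 : ENNReal.ofReal |x a - Function.leftLim x a|
        ≤ eVariationOn x (Icc u a) + ENNReal.ofReal (ε/2) := by
      have habs : |x a - Function.leftLim x a| ≤ dist (x a) (x u) + ε/2 := by
        have : |x a - Function.leftLim x a| ≤ |x a - x u| + |x u - Function.leftLim x a| := by
          have := abs_sub_le (x a) (x u) (Function.leftLim x a); linarith [this]
        rw [Real.dist_eq]; linarith [le_of_lt hu1]
      calc ENNReal.ofReal |x a - Function.leftLim x a|
          ≤ ENNReal.ofReal (dist (x a) (x u) + ε/2) := ENNReal.ofReal_le_ofReal habs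
        _ = ENNReal.ofReal (dist (x a) (x u)) + ENNReal.ofReal (ε/2) :=
            ENNReal.ofReal_add dist_nonneg (by positivity)
        _ ≤ eVariationOn x (Icc u a) + ENNReal.ofReal (ε/2) := by
            have hd : ENNReal.ofReal (dist (x a) (x u)) ≤ eVariationOn x (Icc u a) := by
              rw [← edist_dist]
              exact eVariationOn.edist_le x ⟨hua, le_refl a⟩ ⟨le_refl u, hua⟩
            exact add_le_add_left hd _
    have key2 := IH u hu0 (fun y hy => ⟨(hF (by simp [hy])).1,
        le_of_lt (lt_of_le_of_lt (hc₀s y (by exact_mod_cast hy)) hu2.1)⟩) (ε/2) (by positivity)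
    have has : a ∉ s := fun h => absurd (hlt a h) (lt_irrefl a)
    rw [Finset.sum_insert has]
    have hvar : eVariationOn x (Icc 0 u) + eVariationOn x (Icc u a)
        ≤ eVariationOn x (Icc 0 b) := by
      have e1 : Icc (0:ℝ) a ∩ Icc 0 u = Icc 0 u :=
        inter_eq_self_of_subset_right (Icc_subset_Icc le_rfl hua)
      have e2 : Icc (0:ℝ) a ∩ Icc u a = Icc u a :=
        inter_eq_self_of_subset_right (Icc_subset_Icc hu0 le_rfl)
      have key := eVariationOn.Icc_add_Icc x (s := Icc (0:ℝ) a) hu0 hua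
        (⟨hu0, hua⟩ : u ∈ Icc (0:ℝ) a)
      rw [e1, e2, inter_self] at key
      rw [key]
      exact eVariationOn.mono x (Icc_subset_Icc le_rfl ha.2)
    calc ENNReal.ofReal |x a - Function.leftLim x a|
          + ∑ v ∈ s, ENNReal.ofReal |x v - Function.leftLim x v|
        ≤ (eVariationOn x (Icc u a) + ENNReal.ofReal (ε/2))
          + (eVariationOn x (Icc 0 u) + ENNReal.ofReal (ε/2)) := add_le_add key1 key2
      _ = (eVariationOn x (Icc 0 u) + eVariationOn x (Icc u a))
          + (ENNReal.ofReal (ε/2) + ENNReal.ofReal (ε/2)) := by ring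
      _ ≤ eVariationOn x (Icc 0 b) + ENNReal.ofReal ε := by
          gcongr
          rw [← ENNReal.ofReal_add (by positivity) (by positivity)]
          simp [add_halves]

lemma aux_summable0 (x : ℝ → ℝ) (hx : Cadlag x)
    (hbv : ∀ t : ℝ, 0 ≤ t → BoundedVariationOn x (Set.Icc 0 t))
    {t : ℝ} (ht : 0 ≤ t) :
    Summable ((Ioc (0:ℝ) t).indicator (fun v => |x v - Function.leftLim x v|)) := by
  apply summable_of_sum_le (c := (eVariationOn x (Icc 0 t)).toReal)
  · intro v
    exact Set.indicator_nonneg (fun v _ => abs_nonneg _) v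
  · intro F
    rw [← Finset.sum_filter_add_sum_filter_not F (fun v => v ∈ Ioc (0:ℝ) t)]
    have h2 : ∑ v ∈ F.filter (fun v => ¬ v ∈ Ioc (0:ℝ) t),
        (Ioc (0:ℝ) t).indicator (fun v => |x v - Function.leftLim x v|) v = 0 := by
      apply Finset.sum_eq_zero
      intro v hv
      simp only [Finset.mem_filter] at hv
      simp [Set.indicator_of_notMem hv.2]
    rw [h2, add_zero]
    have h1 : ∑ v ∈ F.filter (fun v => v ∈ Ioc (0:ℝ) t),
        (Ioc (0:ℝ) t).indicator (fun v => |x v - Function.leftLim x v|) v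
        = ∑ v ∈ F.filter (fun v => v ∈ Ioc (0:ℝ) t), |x v - Function.leftLim x v| := by
      apply Finset.sum_congr rfl
      intro v hv
      simp only [Finset.mem_filter] at hv
      simp [Set.indicator_of_mem hv.2]
    rw [h1]
    set G := F.filter (fun v => v ∈ Ioc (0:ℝ) t) with hG
    have hGsub : ↑G ⊆ Ioc (0:ℝ) t := by
      intro v hv
      simp only [hG, Finset.coe_filter, Set.mem_setOf_eq] at hv
      exact hv.2
    have hofreal : ENNReal.ofReal (∑ v ∈ G, |x v - Function.leftLim x v|)
        ≤ eVariationOn x (Icc 0 t) := by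
      rw [ENNReal.ofReal_sum_of_nonneg (fun v _ => abs_nonneg _)]
      apply ENNReal.le_of_forall_pos_le_add
      intro ε hε _
      calc ∑ v ∈ G, ENNReal.ofReal |x v - Function.leftLim x v|
          ≤ eVariationOn x (Icc 0 t) + ENNReal.ofReal ε :=
            aux_sum_abs_le x hx G t ht hGsub ε hε
        _ ≤ eVariationOn x (Icc 0 t) + ε := by
            gcongr; exact ENNReal.ofReal_le_of_le_toReal (by simp)
    exact (ENNReal.ofReal_le_iff_le_toReal (hbv t ht)).mp hofreal


lemma aux_summable (x : ℝ → ℝ) (hx : Cadlag x)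
    (hbv : ∀ t : ℝ, 0 ≤ t → BoundedVariationOn x (Set.Icc 0 t))
    {t : ℝ} (ht : 0 ≤ t) :
    Summable ((Ioc (0:ℝ) t).indicator (fun v => |auxJ x v|)) :=
  aux_summable0 x hx hbv ht

section Ctx

variable {x : ℝ → ℝ} {δ : ℝ} {I : ℝ → ℝ}

lemma aux_sumS (hx : Cadlag x)
    (hbv : ∀ t : ℝ, 0 ≤ t → BoundedVariationOn x (Set.Icc 0 t))
    {t : ℝ} (ht : 0 ≤ t) {S : Set ℝ} (hS : S ⊆ Ioc 0 t) {g : ℝ → ℝ}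
    (hdom : ∀ v ∈ S, |g v| ≤ |auxJ x v|) : Summable (fun v : S => g v) :=
  aux_summable_on (aux_summable x hx hbv ht) hS hdom (fun _ => abs_nonneg _)

lemma aux_sumJ (hx : Cadlag x)
    (hbv : ∀ t : ℝ, 0 ≤ t → BoundedVariationOn x (Set.Icc 0 t))
    {t : ℝ} (ht : 0 ≤ t) {S : Set ℝ} (hS : S ⊆ Ioc 0 t) :
    Summable (fun v : S => auxJ x v) :=
  aux_sumS hx hbv ht hS (fun v _ => le_refl _)

lemma aux_sumMin (hx : Cadlag x)
    (hbv : ∀ t : ℝ, 0 ≤ t → BoundedVariationOn x (Set.Icc 0 t))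
    {t : ℝ} (ht : 0 ≤ t) {S : Set ℝ} (hS : S ⊆ Ioc 0 t) :
    Summable (fun v : S => min (auxJ x v) 0) := by
  refine aux_sumS hx hbv ht hS (g := fun v => min (auxJ x v) 0) ?_
  intro v _
  rw [abs_le]
  constructor
  · exact le_min (neg_abs_le _) (by simp [abs_nonneg])
  · exact le_trans (min_le_right _ _) (abs_nonneg _)

lemma aux_Mneg {S : Set ℝ} : (∑' v : S, min (auxJ x v) 0) ≤ 0 :=
  tsum_nonpos (fun v => min_le_right _ _)

/-- disjoint splitting of the jump-min sum over `Ioc a u ∪ Ioc u b` -/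
lemma aux_Msplit (hx : Cadlag x)
    (hbv : ∀ t : ℝ, 0 ≤ t → BoundedVariationOn x (Set.Icc 0 t))
    {a u b : ℝ} (ha : 0 ≤ a) (hau : a ≤ u) (hub : u ≤ b) :
    (∑' v : Ioc a b, min (auxJ x v) 0)
      = (∑' v : Ioc a u, min (auxJ x v) 0) + ∑' v : Ioc u b, min (auxJ x v) 0 := by
  have hb : (0:ℝ) ≤ b := le_trans (le_trans ha hau) hub
  have hdisj : Disjoint (Ioc a u) (Ioc u b) := by
    rw [Set.disjoint_left]
    rintro v ⟨_, h1⟩ ⟨h2, _⟩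
    exact absurd (lt_of_le_of_lt h1 h2) (lt_irrefl v)
  have hunion : Ioc a u ∪ Ioc u b = Ioc a b := Set.Ioc_union_Ioc_eq_Ioc hau hub
  have h1 : Summable ((fun v => min (auxJ x v) 0) ∘ (Subtype.val : Ioc a u → ℝ)) :=
    aux_sumMin hx hbv hb (fun v hv => ⟨lt_of_le_of_lt ha hv.1, le_trans hv.2 hub⟩)
  have h2 : Summable ((fun v => min (auxJ x v) 0) ∘ (Subtype.val : Ioc u b → ℝ)) :=
    aux_sumMin hx hbv hb (fun v hv => ⟨lt_of_le_of_lt (le_trans ha hau) hv.1, hv.2⟩)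
  rw [← hunion]
  exact Summable.tsum_union_disjoint hdisj h1 h2

lemma aux_xdiff (hx : Cadlag x)
    (hbv : ∀ t : ℝ, 0 ≤ t → BoundedVariationOn x (Set.Icc 0 t))
    (hdecomp : ∀ t : ℝ, 0 ≤ t →
      x t = x 0 + δ * t + ∑' s : Set.Ioc (0:ℝ) t, (x s - Function.leftLim x s))
    {a u : ℝ} (ha : 0 ≤ a) (hau : a ≤ u) :
    x u - x a = δ * (u - a) + ∑' v : Ioc a u, auxJ x v := by
  have hu : (0:ℝ) ≤ u := le_trans ha hau
  have hdisj : Disjoint (Ioc (0:ℝ) a) (Ioc a u) := by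
    rw [Set.disjoint_left]
    rintro v ⟨_, h1⟩ ⟨h2, _⟩
    exact absurd (lt_of_le_of_lt h1 h2) (lt_irrefl v)
  have h1 : Summable ((fun v => auxJ x v) ∘ (Subtype.val : Ioc (0:ℝ) a → ℝ)) :=
    aux_sumJ hx hbv hu (fun v hv => ⟨hv.1, le_trans hv.2 hau⟩)
  have h2 : Summable ((fun v => auxJ x v) ∘ (Subtype.val : Ioc a u → ℝ)) :=
    aux_sumJ hx hbv hu (fun v hv => ⟨lt_of_le_of_lt ha hv.1, hv.2⟩)
  have hsplit := Summable.tsum_union_disjoint (f := fun v => auxJ x v) hdisj h1 h2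
  rw [Set.Ioc_union_Ioc_eq_Ioc ha hau] at hsplit
  have e1 := hdecomp u hu
  have e2 := hdecomp a ha
  have e1' : x u = x 0 + δ * u + ∑' v : Ioc (0:ℝ) u, auxJ x v := e1
  have e2' : x a = x 0 + δ * a + ∑' v : Ioc (0:ℝ) a, auxJ x v := e2
  rw [e1', e2', hsplit]
  ring

lemma aux_xdiff_ge (hx : Cadlag x)
    (hbv : ∀ t : ℝ, 0 ≤ t → BoundedVariationOn x (Set.Icc 0 t))
    (hδ : 0 < δ)
    (hdecomp : ∀ t : ℝ, 0 ≤ t →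
      x t = x 0 + δ * t + ∑' s : Set.Ioc (0:ℝ) t, (x s - Function.leftLim x s))
    {a u : ℝ} (ha : 0 ≤ a) (hau : a ≤ u) :
    (∑' v : Ioc a u, min (auxJ x v) 0) ≤ x u - x a := by
  rw [aux_xdiff hx hbv hdecomp ha hau]
  have hu : (0:ℝ) ≤ u := le_trans ha hau
  have h1 : Summable (fun v : Ioc a u => min (auxJ x v) 0) :=
    aux_sumMin hx hbv hu (fun v hv => ⟨lt_of_le_of_lt ha hv.1, hv.2⟩)
  have h2 : Summable (fun v : Ioc a u => auxJ x v) :=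
    aux_sumJ hx hbv hu (fun v hv => ⟨lt_of_le_of_lt ha hv.1, hv.2⟩)
  have := Summable.tsum_le_tsum (fun v : Ioc a u => min_le_left (auxJ x v) 0) h1 h2
  nlinarith [mul_nonneg (le_of_lt hδ) (sub_nonneg.mpr hau)]

lemma aux_lb (hx : Cadlag x)
    (hbv : ∀ t : ℝ, 0 ≤ t → BoundedVariationOn x (Set.Icc 0 t))
    (hδ : 0 < δ)
    (hdecomp : ∀ t : ℝ, 0 ≤ t →
      x t = x 0 + δ * t + ∑' s : Set.Ioc (0:ℝ) t, (x s - Function.leftLim x s))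
    {b : ℝ} (hb : 0 ≤ b) {u : ℝ} (hu : u ∈ Icc (0:ℝ) b) :
    min (x 0) 0 + (∑' v : Ioc (0:ℝ) b, min (auxJ x v) 0) ≤ min (x u) 0 := by
  have h1 : (∑' v : Ioc (0:ℝ) b, min (auxJ x v) 0)
      ≤ ∑' v : Ioc (0:ℝ) u, min (auxJ x v) 0 := by
    rw [aux_Msplit hx hbv (le_refl 0) hu.1 hu.2]
    have : (∑' v : Ioc u b, min (auxJ x v) 0) ≤ 0 := aux_Mneg
    linarith
  have h2 : (∑' v : Ioc (0:ℝ) u, min (auxJ x v) 0) ≤ x u - x 0 :=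
    aux_xdiff_ge hx hbv hδ hdecomp (le_refl 0) hu.1
  have h3 : min (x 0) 0 + min (x u - x 0) 0 ≤ min (x u) 0 := by
    have := aux_minmin (x 0) (x u - x 0)
    simpa using this
  have h4 : (∑' v : Ioc (0:ℝ) b, min (auxJ x v) 0) ≤ min (x u - x 0) 0 :=
    aux_minge (le_trans h1 h2) aux_Mneg
  linarith


/-- the function whose infimum defines I -/
noncomputable abbrev auxmx (x : ℝ → ℝ) : ℝ → ℝ := fun v => min (x v) 0

lemma aux_bdd (hx : Cadlag x)
    (hbv : ∀ t : ℝ, 0 ≤ t → BoundedVariationOn x (Set.Icc 0 t))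
    (hδ : 0 < δ)
    (hdecomp : ∀ t : ℝ, 0 ≤ t →
      x t = x 0 + δ * t + ∑' s : Set.Ioc (0:ℝ) t, (x s - Function.leftLim x s))
    {b : ℝ} (hb : 0 ≤ b) :
    BddBelow (auxmx x '' Icc 0 b) := by
  refine ⟨min (x 0) 0 + (∑' v : Ioc (0:ℝ) b, min (auxJ x v) 0), ?_⟩
  rintro y ⟨u, hu, rfl⟩
  exact aux_lb hx hbv hδ hdecomp hb hu

lemma aux_I_le (hx : Cadlag x)
    (hbv : ∀ t : ℝ, 0 ≤ t → BoundedVariationOn x (Set.Icc 0 t))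
    (hδ : 0 < δ)
    (hdecomp : ∀ t : ℝ, 0 ≤ t →
      x t = x 0 + δ * t + ∑' s : Set.Ioc (0:ℝ) t, (x s - Function.leftLim x s))
    (hI : ∀ t : ℝ, I t = sInf ((fun s => min (x s) 0) '' Set.Icc 0 t))
    {b : ℝ} (hb : 0 ≤ b) {u : ℝ} (hu : u ∈ Icc (0:ℝ) b) :
    I b ≤ min (x u) 0 := by
  rw [hI b]
  exact csInf_le (aux_bdd hx hbv hδ hdecomp hb) (Set.mem_image_of_mem _ hu)

lemma aux_I_mono (hx : Cadlag x)
    (hbv : ∀ t : ℝ, 0 ≤ t → BoundedVariationOn x (Set.Icc 0 t))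
    (hδ : 0 < δ)
    (hdecomp : ∀ t : ℝ, 0 ≤ t →
      x t = x 0 + δ * t + ∑' s : Set.Ioc (0:ℝ) t, (x s - Function.leftLim x s))
    (hI : ∀ t : ℝ, I t = sInf ((fun s => min (x s) 0) '' Set.Icc 0 t))
    {a b : ℝ} (ha : 0 ≤ a) (hab : a ≤ b) :
    I b ≤ I a := by
  rw [hI a]
  have N : ((fun s => min (x s) 0) '' Icc (0:ℝ) a).Nonempty :=
    ⟨min (x 0) 0, 0, ⟨le_refl 0, ha⟩, rfl⟩
  apply le_csInf N
  rintro y ⟨u, hu, rfl⟩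
  exact aux_I_le hx hbv hδ hdecomp hI (le_trans ha hab) ⟨hu.1, le_trans hu.2 hab⟩

lemma aux_I_nonpos (hx : Cadlag x)
    (hbv : ∀ t : ℝ, 0 ≤ t → BoundedVariationOn x (Set.Icc 0 t))
    (hδ : 0 < δ)
    (hdecomp : ∀ t : ℝ, 0 ≤ t →
      x t = x 0 + δ * t + ∑' s : Set.Ioc (0:ℝ) t, (x s - Function.leftLim x s))
    (hI : ∀ t : ℝ, I t = sInf ((fun s => min (x s) 0) '' Set.Icc 0 t))
    {b : ℝ} (hb : 0 ≤ b) : I b ≤ 0 :=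
  le_trans (aux_I_le hx hbv hδ hdecomp hI hb ⟨le_refl 0, hb⟩) (min_le_right _ _)

lemma aux_Isplit (hx : Cadlag x)
    (hbv : ∀ t : ℝ, 0 ≤ t → BoundedVariationOn x (Set.Icc 0 t))
    (hδ : 0 < δ)
    (hdecomp : ∀ t : ℝ, 0 ≤ t →
      x t = x 0 + δ * t + ∑' s : Set.Ioc (0:ℝ) t, (x s - Function.leftLim x s))
    (hI : ∀ t : ℝ, I t = sInf ((fun s => min (x s) 0) '' Set.Icc 0 t))
    {a b : ℝ} (ha : 0 ≤ a) (hab : a < b) :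
    I b = min (I a) (sInf (auxmx x '' Ioc a b)) := by
  have hb : (0:ℝ) ≤ b := le_trans ha (le_of_lt hab)
  rw [hI b, hI a]
  have hdecompose : Icc (0:ℝ) 0 ∪ Ioc 0 b = Icc 0 b := Set.Icc_union_Ioc_eq_Icc (le_refl 0) hb
  have : Icc (0:ℝ) b = Icc 0 a ∪ Ioc a b := (Set.Icc_union_Ioc_eq_Icc ha (le_of_lt hab)).symm
  have B1 : BddBelow ((fun s => min (x s) 0) '' Icc 0 a) := aux_bdd hx hbv hδ hdecomp ha
  have N1 : ((fun s => min (x s) 0) '' Icc (0:ℝ) a).Nonempty :=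
    ⟨min (x 0) 0, 0, ⟨le_refl 0, ha⟩, rfl⟩
  have B2 : BddBelow ((fun s => min (x s) 0) '' Ioc a b) :=
    (aux_bdd hx hbv hδ hdecomp hb).mono
      (Set.image_mono (show Ioc a b ⊆ Icc 0 b from
        fun v hv => ⟨le_trans ha (le_of_lt hv.1), hv.2⟩))
  have N2 : ((fun s => min (x s) 0) '' Ioc a b).Nonempty :=
    ⟨min (x b) 0, b, ⟨hab, le_refl b⟩, rfl⟩
  rw [this, Set.image_union, csInf_union B1 N1 B2 N2]

lemma aux_Im (hx : Cadlag x)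
    (hbv : ∀ t : ℝ, 0 ≤ t → BoundedVariationOn x (Set.Icc 0 t))
    (hδ : 0 < δ)
    (hdecomp : ∀ t : ℝ, 0 ≤ t →
      x t = x 0 + δ * t + ∑' s : Set.Ioc (0:ℝ) t, (x s - Function.leftLim x s))
    (hI : ∀ t : ℝ, I t = sInf ((fun s => min (x s) 0) '' Set.Icc 0 t))
    {a : ℝ} (ha : 0 < a) :
    Tendsto I (𝓝[<] a) (𝓝 (sInf (auxmx x '' Ico 0 a))) := by
  set Im := sInf (auxmx x '' Ico 0 a) with hIm
  have hbddIco : BddBelow (auxmx x '' Ico 0 a) :=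
    (aux_bdd hx hbv hδ hdecomp (le_of_lt ha)).mono (Set.image_mono Ico_subset_Icc_self)
  have hlower : ∀ u ∈ Ico (0:ℝ) a, Im ≤ I u := by
    intro u hu
    rw [hI u]
    have N : ((fun s => min (x s) 0) '' Icc (0:ℝ) u).Nonempty :=
      ⟨min (x 0) 0, 0, ⟨le_refl 0, hu.1⟩, rfl⟩
    apply le_csInf N
    rintro y ⟨w, hw, rfl⟩
    exact csInf_le hbddIco ⟨w, ⟨hw.1, lt_of_le_of_lt hw.2 hu.2⟩, rfl⟩
  rw [tendsto_order]
  constructor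
  · intro c hc
    have hmem : Ioo (0:ℝ) a ∈ 𝓝[<] a := Ioo_mem_nhdsLT_of_mem ⟨ha, le_refl a⟩
    filter_upwards [hmem] with u hu
    exact lt_of_lt_of_le hc (hlower u ⟨le_of_lt hu.1, hu.2⟩)
  · intro c hc
    obtain ⟨y, ⟨w, hw, rfl⟩, hy⟩ :=
      exists_lt_of_csInf_lt (⟨min (x 0) 0, 0, ⟨le_refl 0, ha⟩, rfl⟩ :
        (auxmx x '' Ico 0 a).Nonempty) hc
    have hmem : Ioo w a ∈ 𝓝[<] a := Ioo_mem_nhdsLT_of_mem ⟨hw.2, le_refl a⟩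
    filter_upwards [hmem] with u hu
    have hu0 : (0:ℝ) ≤ u := le_trans hw.1 (le_of_lt hu.1)
    have : I u ≤ min (x w) 0 :=
      aux_I_le hx hbv hδ hdecomp hI hu0 ⟨hw.1, le_of_lt hu.1⟩
    exact lt_of_le_of_lt this hy

lemma aux_leftLim_I (hx : Cadlag x)
    (hbv : ∀ t : ℝ, 0 ≤ t → BoundedVariationOn x (Set.Icc 0 t))
    (hδ : 0 < δ)
    (hdecomp : ∀ t : ℝ, 0 ≤ t →
      x t = x 0 + δ * t + ∑' s : Set.Ioc (0:ℝ) t, (x s - Function.leftLim x s))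
    (hI : ∀ t : ℝ, I t = sInf ((fun s => min (x s) 0) '' Set.Icc 0 t))
    {a : ℝ} (ha : 0 < a) :
    Function.leftLim I a = sInf (auxmx x '' Ico 0 a) :=
  leftLim_eq_of_tendsto (aux_Im hx hbv hδ hdecomp hI ha)

lemma aux_Im_nonpos (hx : Cadlag x)
    (hbv : ∀ t : ℝ, 0 ≤ t → BoundedVariationOn x (Set.Icc 0 t))
    (hδ : 0 < δ)
    (hdecomp : ∀ t : ℝ, 0 ≤ t →
      x t = x 0 + δ * t + ∑' s : Set.Ioc (0:ℝ) t, (x s - Function.leftLim x s))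
    {a : ℝ} (ha : 0 < a) :
    sInf (auxmx x '' Ico 0 a) ≤ 0 := by
  have hbddIco : BddBelow (auxmx x '' Ico 0 a) :=
    (aux_bdd hx hbv hδ hdecomp (le_of_lt ha)).mono (Set.image_mono Ico_subset_Icc_self)
  exact le_trans (csInf_le hbddIco ⟨0, ⟨le_refl 0, ha⟩, rfl⟩) (min_le_right _ _)

lemma aux_Ijump (hx : Cadlag x)
    (hbv : ∀ t : ℝ, 0 ≤ t → BoundedVariationOn x (Set.Icc 0 t))
    (hδ : 0 < δ)
    (hdecomp : ∀ t : ℝ, 0 ≤ t →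
      x t = x 0 + δ * t + ∑' s : Set.Ioc (0:ℝ) t, (x s - Function.leftLim x s))
    (hI : ∀ t : ℝ, I t = sInf ((fun s => min (x s) 0) '' Set.Icc 0 t))
    {a : ℝ} (ha : 0 < a) :
    I a = min (Function.leftLim I a) (min (x a) 0) := by
  rw [aux_leftLim_I hx hbv hδ hdecomp hI ha, hI a]
  have : Icc (0:ℝ) a = Ico 0 a ∪ {a} := (Set.Ico_union_right (le_of_lt ha)).symm
  have B1 : BddBelow ((fun s => min (x s) 0) '' Ico 0 a) :=
    (aux_bdd hx hbv hδ hdecomp (le_of_lt ha)).mono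
      (Set.image_mono Ico_subset_Icc_self)
  have N1 : ((fun s => min (x s) 0) '' Ico (0:ℝ) a).Nonempty :=
    ⟨min (x 0) 0, 0, ⟨le_refl 0, ha⟩, rfl⟩
  have B2 : BddBelow ({min (x a) 0} : Set ℝ) := bddBelow_singleton
  have N2 : ({min (x a) 0} : Set ℝ).Nonempty := Set.singleton_nonempty _
  rw [this, Set.image_union, Set.image_singleton, csInf_union B1 N1 B2 N2, csInf_singleton]

lemma aux_g_eq_jump (hx : Cadlag x)
    (hbv : ∀ t : ℝ, 0 ≤ t → BoundedVariationOn x (Set.Icc 0 t))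
    (hδ : 0 < δ)
    (hdecomp : ∀ t : ℝ, 0 ≤ t →
      x t = x 0 + δ * t + ∑' s : Set.Ioc (0:ℝ) t, (x s - Function.leftLim x s))
    (hI : ∀ t : ℝ, I t = sInf ((fun s => min (x s) 0) '' Set.Icc 0 t))
    {a : ℝ} (ha : 0 < a) :
    I a - Function.leftLim I a = min (x a - Function.leftLim I a) 0 := by
  have hjump := aux_Ijump hx hbv hδ hdecomp hI ha
  have hL := aux_leftLim_I hx hbv hδ hdecomp hI ha
  have hIm0 : Function.leftLim I a ≤ 0 := by
    rw [hL]; exact aux_Im_nonpos hx hbv hδ hdecomp ha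
  rw [hjump]
  rcases le_total (x a) 0 with h|h <;>
    rcases le_total (Function.leftLim I a) (min (x a) 0) with h'|h' <;>
    simp [min_def] at h' ⊢ <;> split_ifs <;> linarith

lemma aux_LIleLx (hx : Cadlag x)
    (hbv : ∀ t : ℝ, 0 ≤ t → BoundedVariationOn x (Set.Icc 0 t))
    (hδ : 0 < δ)
    (hdecomp : ∀ t : ℝ, 0 ≤ t →
      x t = x 0 + δ * t + ∑' s : Set.Ioc (0:ℝ) t, (x s - Function.leftLim x s))
    (hI : ∀ t : ℝ, I t = sInf ((fun s => min (x s) 0) '' Set.Icc 0 t))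
    {a : ℝ} (ha : 0 < a) :
    Function.leftLim I a ≤ Function.leftLim x a := by
  have h1 : Tendsto I (𝓝[<] a) (𝓝 (Function.leftLim I a)) := by
    rw [aux_leftLim_I hx hbv hδ hdecomp hI ha]
    exact aux_Im hx hbv hδ hdecomp hI ha
  have h2 := aux_xleft x hx ha
  apply le_of_tendsto_of_tendsto h1 h2
  have hmem : Ioo (0:ℝ) a ∈ 𝓝[<] a := Ioo_mem_nhdsLT_of_mem ⟨ha, le_refl a⟩
  filter_upwards [hmem] with u hu
  exact le_trans (aux_I_le hx hbv hδ hdecomp hI (le_of_lt hu.1)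
    ⟨le_of_lt hu.1, le_refl u⟩) (min_le_left _ _)

lemma aux_g_abs (hx : Cadlag x)
    (hbv : ∀ t : ℝ, 0 ≤ t → BoundedVariationOn x (Set.Icc 0 t))
    (hδ : 0 < δ)
    (hdecomp : ∀ t : ℝ, 0 ≤ t →
      x t = x 0 + δ * t + ∑' s : Set.Ioc (0:ℝ) t, (x s - Function.leftLim x s))
    (hI : ∀ t : ℝ, I t = sInf ((fun s => min (x s) 0) '' Set.Icc 0 t))
    {a : ℝ} (ha : 0 < a) :
    |min (x a - Function.leftLim I a) 0| ≤ |auxJ x a| := by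
  have h := aux_LIleLx hx hbv hδ hdecomp hI ha
  have hJ : auxJ x a ≤ x a - Function.leftLim I a := by
    unfold auxJ; linarith
  rw [abs_le]
  constructor
  · apply le_min
    · linarith [neg_abs_le (auxJ x a)]
    · linarith [abs_nonneg (auxJ x a)]
  · exact le_trans (min_le_right _ _) (abs_nonneg _)

lemma aux_subclaim (hx : Cadlag x)
    (hbv : ∀ t : ℝ, 0 ≤ t → BoundedVariationOn x (Set.Icc 0 t))
    (hδ : 0 < δ)
    (hdecomp : ∀ t : ℝ, 0 ≤ t →
      x t = x 0 + δ * t + ∑' s : Set.Ioc (0:ℝ) t, (x s - Function.leftLim x s))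
    (hI : ∀ t : ℝ, I t = sInf ((fun s => min (x s) 0) '' Set.Icc 0 t))
    {a b : ℝ} (ha : 0 ≤ a) (hab : a < b) :
    I a + (∑' v : Ioo a b, min (auxJ x v) 0) ≤ Function.leftLim I b := by
  have hb : (0:ℝ) < b := lt_of_le_of_lt ha hab
  have htend : Tendsto I (𝓝[<] b) (𝓝 (Function.leftLim I b)) := by
    rw [aux_leftLim_I hx hbv hδ hdecomp hI hb]
    exact aux_Im hx hbv hδ hdecomp hI hb
  apply ge_of_tendsto htend
  filter_upwards [Ioo_mem_nhdsLT_of_mem ⟨hab, le_refl b⟩] with u hu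
  set M' := ∑' v : Ioo a b, min (auxJ x v) 0 with hM'
  have hM'0 : M' ≤ 0 := aux_Mneg
  have hu0 : (0:ℝ) ≤ u := le_trans ha (le_of_lt hu.1)
  have hsplitI := aux_Isplit hx hbv hδ hdecomp hI ha hu.1
  have hinf : I a + M' ≤ sInf (auxmx x '' Ioc a u) := by
    have N : (auxmx x '' Ioc a u).Nonempty := ⟨min (x u) 0, u, ⟨hu.1, le_refl u⟩, rfl⟩
    apply le_csInf N
    rintro y ⟨w, hw, rfl⟩
    have h1 : min (x a) 0 + min (x w - x a) 0 ≤ min (x w) 0 := by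
      have := aux_minmin (x a) (x w - x a)
      simpa using this
    have h2 : (∑' v : Ioc a w, min (auxJ x v) 0) ≤ x w - x a :=
      aux_xdiff_ge hx hbv hδ hdecomp ha hw.1.le
    have hwb : w < b := lt_of_le_of_lt hw.2 hu.2
    have h3 : M' = (∑' v : Ioc a w, min (auxJ x v) 0)
        + ∑' v : Ioo w b, min (auxJ x v) 0 := by
      rw [hM', ← Set.Ioc_union_Ioo_eq_Ioo hw.1.le hwb]
      have hdisj : Disjoint (Ioc a w) (Ioo w b) := by
        rw [Set.disjoint_left]
        rintro v ⟨_, h1'⟩ ⟨h2', _⟩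
        exact absurd (lt_of_le_of_lt h1' h2') (lt_irrefl v)
      have hs1 : Summable ((fun v => min (auxJ x v) 0) ∘ (Subtype.val : Ioc a w → ℝ)) :=
        aux_sumMin hx hbv hb.le (fun v hv => ⟨lt_of_le_of_lt ha hv.1, le_trans hv.2 hwb.le⟩)
      have hs2 : Summable ((fun v => min (auxJ x v) 0) ∘ (Subtype.val : Ioo w b → ℝ)) :=
        aux_sumMin hx hbv hb.le (fun v hv =>
          ⟨lt_of_le_of_lt ha (lt_of_le_of_lt hw.1.le hv.1), hv.2.le⟩)
      exact Summable.tsum_union_disjoint (f := fun v => min (auxJ x v) 0) hdisj hs1 hs2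
    have h4 : M' ≤ ∑' v : Ioc a w, min (auxJ x v) 0 := by
      have : (∑' v : Ioo w b, min (auxJ x v) 0) ≤ 0 := aux_Mneg
      linarith
    have h5 : M' ≤ min (x w - x a) 0 := aux_minge (le_trans h4 h2) hM'0
    have h6 : I a ≤ min (x a) 0 :=
      aux_I_le hx hbv hδ hdecomp hI ha ⟨ha, le_refl a⟩
    show I a + M' ≤ min (x w) 0
    linarith
  rw [hsplitI]
  exact le_min (by linarith) hinf

lemma aux_upper (hx : Cadlag x)
    (hbv : ∀ t : ℝ, 0 ≤ t → BoundedVariationOn x (Set.Icc 0 t))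
    (hδ : 0 < δ)
    (hdecomp : ∀ t : ℝ, 0 ≤ t →
      x t = x 0 + δ * t + ∑' s : Set.Ioc (0:ℝ) t, (x s - Function.leftLim x s))
    (hI : ∀ t : ℝ, I t = sInf ((fun s => min (x s) 0) '' Set.Icc 0 t))
    (F : Finset ℝ) : ∀ b : ℝ, 0 ≤ b → ↑F ⊆ Ioc (0:ℝ) b →
    I b - I 0 ≤ ∑ v ∈ F, min (x v - Function.leftLim I v) 0 := by
  induction F using Finset.induction_on_max with
  | empty =>
    intro b hb _
    simp only [Finset.sum_empty]
    linarith [aux_I_mono hx hbv hδ hdecomp hI (le_refl (0:ℝ)) hb]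
  | insert a s hlt IH =>
    intro b hb hF
    have haIoc : a ∈ Ioc (0:ℝ) b := hF (by simp)
    obtain ⟨c₀, hc₀0, hc₀a, hc₀s⟩ : ∃ c₀, 0 ≤ c₀ ∧ c₀ < a ∧ ∀ y ∈ s, y ≤ c₀ := by
      rcases s.eq_empty_or_nonempty with h | h
      · exact ⟨0, le_refl _, haIoc.1, by simp [h]⟩
      · refine ⟨s.max' h, le_of_lt ?_, hlt _ (s.max'_mem h), fun y hy => s.le_max' y hy⟩
        exact (hF (by simp [Finset.mem_insert, (s.max'_mem h)])).1
    have hlim : Tendsto I (𝓝[<] a) (𝓝 (Function.leftLim I a)) := by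
      rw [aux_leftLim_I hx hbv hδ hdecomp hI haIoc.1]
      exact aux_Im hx hbv hδ hdecomp hI haIoc.1
    have hIa : Function.leftLim I a - I 0 ≤ ∑ v ∈ s, min (x v - Function.leftLim I v) 0 := by
      apply le_of_tendsto (hlim.sub_const (I 0))
      filter_upwards [Ioo_mem_nhdsLT_of_mem (⟨hc₀a, le_refl a⟩ : a ∈ Ioc c₀ a)] with c hc
      exact IH c (le_trans hc₀0 hc.1.le)
        (fun y hy => ⟨(hF (by simp [Finset.mem_coe.mp hy])).1,
          le_trans (hc₀s y (Finset.mem_coe.mp hy)) hc.1.le⟩)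
    have hjump := aux_g_eq_jump hx hbv hδ hdecomp hI haIoc.1
    have hmono := aux_I_mono hx hbv hδ hdecomp hI haIoc.1.le haIoc.2
    have hns : a ∉ s := fun hmem => absurd (hlt a hmem) (lt_irrefl a)
    rw [Finset.sum_insert hns]
    linarith

lemma aux_lower (hx : Cadlag x)
    (hbv : ∀ t : ℝ, 0 ≤ t → BoundedVariationOn x (Set.Icc 0 t))
    (hδ : 0 < δ)
    (hdecomp : ∀ t : ℝ, 0 ≤ t →
      x t = x 0 + δ * t + ∑' s : Set.Ioc (0:ℝ) t, (x s - Function.leftLim x s))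
    (hI : ∀ t : ℝ, I t = sInf ((fun s => min (x s) 0) '' Set.Icc 0 t))
    (F : Finset ℝ) : ∀ b : ℝ, 0 < b → ↑F ⊆ Ioo (0:ℝ) b →
    (∑ v ∈ F, min (x v - Function.leftLim I v) 0) + min (x b - Function.leftLim I b) 0
      + (∑' v : ↥(Ioo (0:ℝ) b \ ↑F), min (auxJ x v) 0) ≤ I b - I 0 := by
  induction F using Finset.induction_on_max with
  | empty =>
    intro b hb _
    rw [show Ioo (0:ℝ) b \ ↑(∅ : Finset ℝ) = Ioo 0 b from by simp]
    simp only [Finset.sum_empty, zero_add]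
    have h1 := aux_subclaim hx hbv hδ hdecomp hI (le_refl (0:ℝ)) hb
    have h2 := aux_g_eq_jump hx hbv hδ hdecomp hI hb
    linarith
  | insert m s hlt IH =>
    intro b hb hF
    have hm : m ∈ Ioo (0:ℝ) b := hF (by simp)
    have hs : ↑s ⊆ Ioo (0:ℝ) m :=
      fun y hy => ⟨(hF (by simp [Finset.mem_coe.mp hy])).1, hlt y (Finset.mem_coe.mp hy)⟩
    have IH' := IH m hm.1 hs
    have h1 := aux_subclaim hx hbv hδ hdecomp hI hm.1.le hm.2
    have h2 := aux_g_eq_jump hx hbv hδ hdecomp hI hb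
    have hns : m ∉ s := fun hmem => absurd (hlt m hmem) (lt_irrefl m)
    rw [Finset.sum_insert hns]
    have hseteq : Ioo (0:ℝ) b \ ↑(insert m s) = (Ioo 0 m \ ↑s) ∪ Ioo m b := by
      ext v
      simp only [Finset.coe_insert, Set.mem_diff, Set.mem_insert_iff, Set.mem_union,
        Set.mem_Ioo, not_or, Finset.mem_coe]
      constructor
      · rintro ⟨⟨h0v, hvb⟩, hne, hns'⟩
        rcases lt_trichotomy v m with h|h|h
        · exact Or.inl ⟨⟨h0v, h⟩, hns'⟩
        · exact absurd h hne
        · exact Or.inr ⟨h, hvb⟩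
      · rintro (⟨⟨h0v, hvm⟩, hns'⟩ | ⟨hmv, hvb⟩)
        · exact ⟨⟨h0v, lt_trans hvm hm.2⟩, ⟨ne_of_lt hvm, hns'⟩⟩
        · refine ⟨⟨lt_trans hm.1 hmv, hvb⟩, ⟨ne_of_gt hmv, fun hc => ?_⟩⟩
          exact absurd (hlt v hc) (not_lt_of_gt hmv)
    have hdisj : Disjoint (Ioo (0:ℝ) m \ ↑s) (Ioo m b) := by
      rw [Set.disjoint_left]
      rintro v ⟨hv1, _⟩ hv2
      exact absurd (lt_trans hv1.2 hv2.1) (lt_irrefl v)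
    have hsum1 : Summable ((fun v => min (auxJ x v) 0) ∘ (Subtype.val : ↥(Ioo (0:ℝ) m \ ↑s) → ℝ)) :=
      aux_sumMin hx hbv hb.le
        (fun v hv => ⟨hv.1.1, le_of_lt (lt_trans hv.1.2 hm.2)⟩)
    have hsum2 : Summable ((fun v => min (auxJ x v) 0) ∘ (Subtype.val : Ioo m b → ℝ)) :=
      aux_sumMin hx hbv hb.le
        (fun v hv => ⟨lt_trans hm.1 hv.1, hv.2.le⟩)
    have hsplit : (∑' v : ↥(Ioo (0:ℝ) b \ ↑(insert m s)), min (auxJ x v) 0)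
        = (∑' v : ↥(Ioo (0:ℝ) m \ ↑s), min (auxJ x v) 0)
          + ∑' v : ↥(Ioo m b), min (auxJ x v) 0 := by
      rw [hseteq]
      exact Summable.tsum_union_disjoint (f := fun v => min (auxJ x v) 0) hdisj hsum1 hsum2
    linarith

end Ctx


set_option maxHeartbeats 2000000 in
theorem stmt4 (x : ℝ → ℝ) (hx : Cadlag x)
    (hbv : ∀ t : ℝ, 0 ≤ t → BoundedVariationOn x (Set.Icc 0 t))
    (δ : ℝ) (hδ : 0 < δ)
    (hdecomp : ∀ t : ℝ, 0 ≤ t →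
      x t = x 0 + δ * t + ∑' s : Set.Ioc (0:ℝ) t, (x s - Function.leftLim x s))
    (I xc : ℝ → ℝ)
    (hI : ∀ t : ℝ, I t = sInf ((fun s => min (x s) 0) '' Set.Icc 0 t))
    (hxc : ∀ t : ℝ, xc t = x t - I t) :
    ∀ t : ℝ, 0 ≤ t →
      I t = min (x 0) 0
          + ∑' s : Set.Ioc (0:ℝ) t,
              min (Function.leftLim xc s + (x s - Function.leftLim x s)) 0 := by
  classical
  intro t ht
  have hI0 : I 0 = min (x 0) 0 := by
    rw [hI 0, Set.Icc_self, Set.image_singleton, csInf_singleton]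
  have hcongr : ∀ v : ℝ, 0 < v →
      min (Function.leftLim xc v + (x v - Function.leftLim x v)) 0
        = min (x v - Function.leftLim I v) 0 := by
    intro v hv
    have hxcf : xc = fun u => x u - I u := funext hxc
    have hLx := aux_xleft x hx hv
    have hLI : Tendsto I (𝓝[<] v) (𝓝 (Function.leftLim I v)) := by
      rw [aux_leftLim_I hx hbv hδ hdecomp hI hv]
      exact aux_Im hx hbv hδ hdecomp hI hv
    have hxcL : Function.leftLim xc v
        = Function.leftLim x v - Function.leftLim I v := by
      rw [hxcf]
      exact leftLim_eq_of_tendsto (hLx.sub hLI)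
    rw [hxcL]
    congr 1
    ring
  rcases eq_or_lt_of_le ht with h0 | hpos
  · have : IsEmpty ↥(Set.Ioc (0:ℝ) t) := by
      rw [← h0, Set.Ioc_self]; infer_instance
    rw [tsum_empty, add_zero, ← h0, hI0]
  · -- t > 0
    have hdomg : ∀ v ∈ Ioc (0:ℝ) t, |min (x v - Function.leftLim I v) 0| ≤ |auxJ x v| :=
      fun v hv => aux_g_abs hx hbv hδ hdecomp hI hv.1
    have hsumg : Summable ((fun v => min (x v - Function.leftLim I v) 0)
        ∘ (Subtype.val : Ioc (0:ℝ) t → ℝ)) :=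
      aux_sumS hx hbv ht (le_refl _) hdomg
    set G := ∑' v : Ioc (0:ℝ) t, min (x ↑v - Function.leftLim I ↑v) 0 with hG
    have hup : I t - I 0 ≤ G := by
      have hbound : ∀ Fs : Finset ↥(Ioc (0:ℝ) t),
          (∑ v ∈ Fs, -(min (x ↑v - Function.leftLim I ↑v) 0)) ≤ I 0 - I t := by
        intro Fs
        have hsubset : ↑(Fs.image Subtype.val) ⊆ Ioc (0:ℝ) t := by
          intro v hv
          obtain ⟨w, _, rfl⟩ := Finset.mem_image.mp (Finset.mem_coe.mp hv)
          exact w.2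
        have himg := aux_upper hx hbv hδ hdecomp hI (Fs.image Subtype.val) t ht hsubset
        have heq : ∑ v ∈ Fs.image Subtype.val, min (x v - Function.leftLim I v) 0
            = ∑ v ∈ Fs, min (x ↑v - Function.leftLim I ↑v) 0 :=
          Finset.sum_image (fun a _ b _ h => Subtype.val_injective h)
        rw [Finset.sum_neg_distrib]
        rw [heq] at himg
        linarith
      have hsumneg : Summable (fun v : Ioc (0:ℝ) t =>
          -(min (x ↑v - Function.leftLim I ↑v) 0)) := hsumg.neg
      have := Summable.tsum_le_of_sum_le hsumneg hbound
      rw [tsum_neg] at this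
      linarith
    have hlow : ∀ ε : ℝ, 0 < ε → G - ε ≤ I t - I 0 := by
      intro ε hε
      set f0 : ℝ → ℝ := (Ioc (0:ℝ) t).indicator (fun v => |auxJ x v|) with hf0
      have hsumJ : Summable f0 := aux_summable x hx hbv ht
      obtain ⟨F₀, hF₀⟩ : ∃ F₀ : Finset ℝ, (∑' v, f0 v) - ∑ v ∈ F₀, f0 v < ε := by
        have h := Metric.tendsto_nhds.mp hsumJ.hasSum ε hε
        obtain ⟨F₀, hF₀⟩ := h.exists
        rw [Real.dist_eq] at hF₀
        exact ⟨F₀, by linarith [(abs_lt.mp hF₀).1]⟩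
      have htailc := Summable.sum_add_tsum_compl (s := F₀) hsumJ
      have htsub : (∑' v : ↥((↑F₀ : Set ℝ)ᶜ), f0 ↑v)
          = ∑' v : ℝ, ((↑F₀ : Set ℝ)ᶜ).indicator f0 v := tsum_subtype _ _
      have htail : (∑' v : ℝ, ((↑F₀ : Set ℝ)ᶜ).indicator f0 v) < ε := by
        rw [← htsub]; linarith
      set F : Finset ℝ := F₀.filter (fun v => v ∈ Ioo (0:ℝ) t) with hF
      have hFsub : ↑F ⊆ Ioo (0:ℝ) t :=
        fun v hv => (Finset.mem_filter.mp (Finset.mem_coe.mp hv)).2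
      have hmain := aux_lower hx hbv hδ hdecomp hI F t hpos hFsub
      have hSsum : Summable ((fun v => min (auxJ x v) 0)
          ∘ (Subtype.val : ↥(Ioo (0:ℝ) t \ ↑F) → ℝ)) :=
        aux_sumMin hx hbv ht (fun v hv => ⟨hv.1.1, hv.1.2.le⟩)
      have hE : -(∑' v : ℝ, ((↑F₀ : Set ℝ)ᶜ).indicator f0 v)
          ≤ ∑' v : ↥(Ioo (0:ℝ) t \ ↑F), min (auxJ x ↑v) 0 := by
        rw [tsum_subtype (Ioo (0:ℝ) t \ ↑F) (fun v => min (auxJ x v) 0), ← tsum_neg]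
        apply Summable.tsum_le_tsum _ ((hsumJ.indicator _).neg)
          (summable_subtype_iff_indicator.mp hSsum)
        intro v
        by_cases hv : v ∈ Ioo (0:ℝ) t \ ↑F
        · have hv1 : v ∈ Ioc (0:ℝ) t := ⟨hv.1.1, hv.1.2.le⟩
          have hvF₀ : v ∈ ((↑F₀ : Set ℝ)ᶜ) := by
            intro hc
            exact hv.2 (Finset.mem_coe.mpr (Finset.mem_filter.mpr ⟨hc, hv.1⟩))
          rw [Set.indicator_of_mem hvF₀, Set.indicator_of_mem hv, hf0,
            Set.indicator_of_mem hv1]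
          exact le_min (neg_abs_le _) (by linarith [abs_nonneg (auxJ x v)])
        · rw [Set.indicator_of_notMem hv]
          have h0' : 0 ≤ ((↑F₀ : Set ℝ)ᶜ).indicator f0 v :=
            Set.indicator_nonneg (fun w _ =>
              Set.indicator_nonneg (fun z _ => abs_nonneg _) w) v
          linarith
      have htF : t ∉ F := by
        intro hc
        exact absurd (hFsub (Finset.mem_coe.mpr hc)).2 (lt_irrefl t)
      have hins : (↑(insert t F) : Set ℝ) ⊆ Ioc (0:ℝ) t := by
        intro v hv
        rcases Finset.mem_insert.mp (Finset.mem_coe.mp hv) with h | h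
        · rw [h]; exact ⟨hpos, le_refl t⟩
        · exact ⟨(hFsub (Finset.mem_coe.mpr h)).1, (hFsub (Finset.mem_coe.mpr h)).2.le⟩
      have hfin : G ≤ ∑ v ∈ insert t F, min (x v - Function.leftLim I v) 0 := by
        have hunion : (↑(insert t F) : Set ℝ) ∪ (Ioc (0:ℝ) t \ ↑(insert t F))
            = Ioc (0:ℝ) t := Set.union_diff_cancel hins
        have hs1 : Summable ((fun v => min (x v - Function.leftLim I v) 0)
            ∘ (Subtype.val : ↥(↑(insert t F) : Set ℝ) → ℝ)) :=
          aux_sumS hx hbv ht hins (fun v hv => hdomg v (hins hv))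
        have hs2 : Summable ((fun v => min (x v - Function.leftLim I v) 0)
            ∘ (Subtype.val : ↥(Ioc (0:ℝ) t \ ↑(insert t F)) → ℝ)) :=
          aux_sumS hx hbv ht (fun v hv => hv.1) (fun v hv => hdomg v hv.1)
        have hsplit := Summable.tsum_union_disjoint
          (f := fun v => min (x v - Function.leftLim I v) 0)
          Set.disjoint_sdiff_right hs1 hs2
        rw [hunion] at hsplit
        have h2' : (∑' v : ↥(Ioc (0:ℝ) t \ ↑(insert t F)),
            min (x ↑v - Function.leftLim I ↑v) 0) ≤ 0 :=
          tsum_nonpos (fun v => min_le_right _ _)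
        have h1' : (∑' v : ↥((↑(insert t F) : Set ℝ)),
            min (x ↑v - Function.leftLim I ↑v) 0)
            = ∑ v ∈ insert t F, min (x v - Function.leftLim I v) 0 :=
          Finset.tsum_subtype' (insert t F) (fun v => min (x v - Function.leftLim I v) 0)
        rw [hG, hsplit, h1']
        linarith
      rw [Finset.sum_insert htF] at hfin
      linarith
    have hEq : I t - I 0 = G := by
      refine le_antisymm hup ?_
      apply le_of_forall_pos_le_add
      intro ε hε
      linarith [hlow ε hε]
    have hfinal : (∑' s : Set.Ioc (0:ℝ) t,
        min (Function.leftLim xc ↑s + (x ↑s - Function.leftLim x ↑s)) 0) = G :=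
      tsum_congr (fun v => hcongr ↑v v.2.1)
    rw [hfinal]
    linarith
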